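/- With the degree recurrence g_3^{(r+1)} = g_3^{(r)} for r even, and g_3^{(r+1)} = -g_3^{(r)} + [C^{(r)}_{-1,3}]_-·(1,-3,-2) + 3[C^{(r)}_{-2,3}]_-·(1,0,0) + [C^{(r)}_{-3,3}]_-·(1,3,2) for r odd, starting from g_3^{(0)} = (2,3,2), the closed form holds: g_3^{(2r)} = (2+r, 3, 2) for r ≥ 0, g_3^{(-2)} = (2,0,0), and g_3^{(2r)} = (-r, -3, -2) for r < -1. -/
import Mathlib

/-- `[x]_- = max(0, -x)`. -/
def nPart (x : ℤ) : ℤ := max 0 (-x)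

/-- The bipartite-belt step applied when `r` is even: columns `1` and `2`
change sign, and column `3` is updated. -/
def stepEven (C : Matrix (Fin 3) (Fin 3) ℤ) : Matrix (Fin 3) (Fin 3) ℤ :=
  Matrix.of fun i j =>
    if j = 2 then C i 2 - nPart (C i 0) - ![3, 1, 3] i * nPart (C i 1)
    else -C i j

/-- The bipartite-belt step applied when `r` is odd: column `3` changes sign,
and columns `1` and `2` are updated. -/
def stepOdd (C : Matrix (Fin 3) (Fin 3) ℤ) : Matrix (Fin 3) (Fin 3) ℤ :=
  Matrix.of fun i j =>
    if j = 2 then -C i 2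
    else if j = 0 then C i 0 - nPart (C i 2)
    else C i 1 - ![1, 3, 1] i * nPart (C i 2)

/-- The initial value `C⁽⁰⁾`; rows are indexed by `(-1,-2,-3)`, columns by `(1,2,3)`. -/
def C0 : Matrix (Fin 3) (Fin 3) ℤ := !![1, 0, 0; -1, -1, 1; 0, -1, 1]

lemma stepEven_inj {A B : Matrix (Fin 3) (Fin 3) ℤ} (h : stepEven A = stepEven B) : A = B := by
  ext i j
  have h0 := congrFun (congrFun h i) 0
  have h1 := congrFun (congrFun h i) 1
  have h2 := congrFun (congrFun h i) 2
  simp [stepEven] at h0 h1 h2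
  rw [h0, h1] at h2
  fin_cases j
  · exact h0
  · exact h1
  · simpa using by linarith [h2]

lemma stepOdd_inj {A B : Matrix (Fin 3) (Fin 3) ℤ} (h : stepOdd A = stepOdd B) : A = B := by
  ext i j
  have h0 := congrFun (congrFun h i) 0
  have h1 := congrFun (congrFun h i) 1
  have h2 := congrFun (congrFun h i) 2
  simp [stepOdd] at h0 h1 h2
  rw [h2] at h0 h1
  fin_cases j
  · simpa using by linarith [h0]
  · simpa using by linarith [h1]
  · exact h2

set_option maxHeartbeats 1600000 in
/-- Forward closed form: values at `4k+1, 4k+2, 4k+3, 4k+4`. -/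
lemma fwd (C : ℤ → Matrix (Fin 3) (Fin 3) ℤ) (h0 : C 0 = C0)
    (hrec : ∀ r : ℤ, C (r + 1) = if Even r then stepEven (C r) else stepOdd (C r)) :
    ∀ k : ℕ,
    C (4*(k:ℤ)+1) = !![(k:ℤ)-1, k, -2*k; 1,1,-1; (k:ℤ), k+1, -2*k-2] ∧
    C (4*(k:ℤ)+2) = !![-(k:ℤ)-1, -k, 2*k; 0,-2,1; -(k:ℤ)-2, -k-1, 2*k+2] ∧
    C (4*(k:ℤ)+3) = !![(k:ℤ)+1, k, -2*k-1; 0,2,-1; (k:ℤ)+2, k+1, -2*k-3] ∧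
    C (4*(k:ℤ)+4) = !![-(k:ℤ), -k-1, 2*k+1; -1,-1,1; -(k:ℤ)-1, -k-2, 2*k+3] := by
  intro k
  induction k with
  | zero =>
    have e1 : C 1 = !![-1,0,0;1,1,-1;0,1,-2] := by
      have h := hrec 0
      rw [if_pos ⟨0, rfl⟩, h0, zero_add] at h
      rw [h]; decide
    have e2 : C 2 = !![-1,0,0;0,-2,1;-2,-1,2] := by
      have h := hrec 1
      rw [if_neg (by rintro ⟨t, ht⟩; omega), e1] at h
      rw [show (2:ℤ) = 1 + 1 from rfl, h]; decide
    have e3 : C 3 = !![1,0,-1;0,2,-1;2,1,-3] := by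
      have h := hrec 2
      rw [if_pos ⟨1, rfl⟩, e2] at h
      rw [show (3:ℤ) = 2 + 1 from rfl, h]; decide
    have e4 : C 4 = !![0,-1,1;-1,-1,1;-1,-2,3] := by
      have h := hrec 3
      rw [if_neg (by rintro ⟨t, ht⟩; omega), e3] at h
      rw [show (4:ℤ) = 3 + 1 from rfl, h]; decide
    refine ⟨?_, ?_, ?_, ?_⟩
    · rw [show 4*((0:ℕ):ℤ)+1 = 1 from by norm_num, e1]; decide
    · rw [show 4*((0:ℕ):ℤ)+2 = 2 from by norm_num, e2]; decide
    · rw [show 4*((0:ℕ):ℤ)+3 = 3 from by norm_num, e3]; decide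
    · rw [show 4*((0:ℕ):ℤ)+4 = 4 from by norm_num, e4]; decide
  | succ k ih =>
    obtain ⟨-, -, -, h4⟩ := ih
    have e5 : C (4*(k:ℤ)+5) = !![(k:ℤ), k+1, -2*k-2; 1,1,-1; (k:ℤ)+1, k+2, -2*k-4] := by
      have h := hrec (4*(k:ℤ)+4)
      rw [if_pos ⟨2*(k:ℤ)+2, by ring⟩, h4,
        show (4*(k:ℤ)+4)+1 = 4*(k:ℤ)+5 from by ring] at h
      rw [h]
      ext i j <;> fin_cases i <;> fin_cases j <;> simp [stepEven, nPart] <;> omega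
    have e6 : C (4*(k:ℤ)+6) = !![-(k:ℤ)-2, -k-1, 2*k+2; 0,-2,1; -(k:ℤ)-3, -k-2, 2*k+4] := by
      have h := hrec (4*(k:ℤ)+5)
      rw [if_neg (by rintro ⟨t, ht⟩; omega), e5,
        show (4*(k:ℤ)+5)+1 = 4*(k:ℤ)+6 from by ring] at h
      rw [h]
      ext i j <;> fin_cases i <;> fin_cases j <;> simp [stepOdd, nPart] <;> omega
    have e7 : C (4*(k:ℤ)+7) = !![(k:ℤ)+2, k+1, -2*k-3; 0,2,-1; (k:ℤ)+3, k+2, -2*k-5] := by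
      have h := hrec (4*(k:ℤ)+6)
      rw [if_pos ⟨2*(k:ℤ)+3, by ring⟩, e6,
        show (4*(k:ℤ)+6)+1 = 4*(k:ℤ)+7 from by ring] at h
      rw [h]
      ext i j <;> fin_cases i <;> fin_cases j <;> simp [stepEven, nPart] <;> omega
    have e8 : C (4*(k:ℤ)+8) = !![-(k:ℤ)-1, -k-2, 2*k+3; -1,-1,1; -(k:ℤ)-2, -k-3, 2*k+5] := by
      have h := hrec (4*(k:ℤ)+7)
      rw [if_neg (by rintro ⟨t, ht⟩; omega), e7,
        show (4*(k:ℤ)+7)+1 = 4*(k:ℤ)+8 from by ring] at h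
      rw [h]
      ext i j <;> fin_cases i <;> fin_cases j <;> simp [stepOdd, nPart] <;> omega
    refine ⟨?_, ?_, ?_, ?_⟩ <;> push_cast
    · rw [show 4*((k:ℤ)+1)+1 = 4*(k:ℤ)+5 from by ring, e5]
      ext i j <;> fin_cases i <;> fin_cases j <;> simp <;> ring
    · rw [show 4*((k:ℤ)+1)+2 = 4*(k:ℤ)+6 from by ring, e6]
      ext i j <;> fin_cases i <;> fin_cases j <;> simp <;> ring
    · rw [show 4*((k:ℤ)+1)+3 = 4*(k:ℤ)+7 from by ring, e7]
      ext i j <;> fin_cases i <;> fin_cases j <;> simp <;> ring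
    · rw [show 4*((k:ℤ)+1)+4 = 4*(k:ℤ)+8 from by ring, e8]
      ext i j <;> fin_cases i <;> fin_cases j <;> simp <;> ring

/-- Backward: the special values `C(-1), C(-2), C(-3)`. -/
lemma bwdSmall (C : ℤ → Matrix (Fin 3) (Fin 3) ℤ) (h0 : C 0 = C0)
    (hrec : ∀ r : ℤ, C (r + 1) = if Even r then stepEven (C r) else stepOdd (C r)) :
    C (-1) = !![1,0,0;0,2,-1;1,0,-1] ∧
    C (-2) = !![-1,0,1;0,-2,1;-1,0,0] ∧
    C (-3) = !![0,1,-1;1,1,-1;-1,0,0] := by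
  have e1 : C (-1) = !![1,0,0;0,2,-1;1,0,-1] := by
    have h := hrec (-1)
    rw [if_neg (by rintro ⟨t, ht⟩; omega), show (-1:ℤ)+1 = 0 from by ring, h0] at h
    exact stepOdd_inj (h ▸ (by decide : stepOdd !![1,0,0;0,2,-1;1,0,-1] = C0)).symm
  have e2 : C (-2) = !![-1,0,1;0,-2,1;-1,0,0] := by
    have h := hrec (-2)
    rw [if_pos ⟨-1, by ring⟩, show (-2:ℤ)+1 = -1 from by ring, e1] at h
    exact stepEven_inj (h ▸ (by decide :
      stepEven !![-1,0,1;0,-2,1;-1,0,0] = !![1,0,0;0,2,-1;1,0,-1])).symm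
  have e3 : C (-3) = !![0,1,-1;1,1,-1;-1,0,0] := by
    have h := hrec (-3)
    rw [if_neg (by rintro ⟨t, ht⟩; omega), show (-3:ℤ)+1 = -2 from by ring, e2] at h
    exact stepOdd_inj (h ▸ (by decide :
      stepOdd !![0,1,-1;1,1,-1;-1,0,0] = !![-1,0,1;0,-2,1;-1,0,0])).symm
  exact ⟨e1, e2, e3⟩

set_option maxHeartbeats 1600000 in
/-- Backward closed form: values at `-4k-4, -4k-5, -4k-6, -4k-7`. -/
lemma bwd (C : ℤ → Matrix (Fin 3) (Fin 3) ℤ) (h0 : C 0 = C0)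
    (hrec : ∀ r : ℤ, C (r + 1) = if Even r then stepEven (C r) else stepOdd (C r)) :
    ∀ k : ℕ,
    C (-4*(k:ℤ)-4) = !![-(k:ℤ), -k-1, 2*k+2; -1,-1,1; 1-(k:ℤ), -k, 2*k] ∧
    C (-4*(k:ℤ)-5) = !![(k:ℤ)+2, k+1, -2*k-2; 0,2,-1; (k:ℤ)+1, k, -2*k] ∧
    C (-4*(k:ℤ)-6) = !![-(k:ℤ)-2, -k-1, 2*k+3; 0,-2,1; -(k:ℤ)-1, -k, 2*k+1] ∧
    C (-4*(k:ℤ)-7) = !![(k:ℤ)+1, k+2, -2*k-3; 1,1,-1; (k:ℤ), k+1, -2*k-1] := by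
  obtain ⟨e1, e2, e3⟩ := bwdSmall C h0 hrec
  intro k
  induction k with
  | zero =>
    have e4 : C (-4) = !![0,-1,2;-1,-1,1;1,0,0] := by
      have h := hrec (-4)
      rw [if_pos ⟨-2, by ring⟩, show (-4:ℤ)+1 = -3 from by ring, e3] at h
      exact stepEven_inj (h ▸ (by decide :
        stepEven !![0,-1,2;-1,-1,1;1,0,0] = !![0,1,-1;1,1,-1;-1,0,0])).symm
    have e5 : C (-5) = !![2,1,-2;0,2,-1;1,0,0] := by
      have h := hrec (-5)
      rw [if_neg (by rintro ⟨t, ht⟩; omega), show (-5:ℤ)+1 = -4 from by ring, e4] at h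
      exact stepOdd_inj (h ▸ (by decide :
        stepOdd !![2,1,-2;0,2,-1;1,0,0] = !![0,-1,2;-1,-1,1;1,0,0])).symm
    have e6 : C (-6) = !![-2,-1,3;0,-2,1;-1,0,1] := by
      have h := hrec (-6)
      rw [if_pos ⟨-3, by ring⟩, show (-6:ℤ)+1 = -5 from by ring, e5] at h
      exact stepEven_inj (h ▸ (by decide :
        stepEven !![-2,-1,3;0,-2,1;-1,0,1] = !![2,1,-2;0,2,-1;1,0,0])).symm
    have e7 : C (-7) = !![1,2,-3;1,1,-1;0,1,-1] := by
      have h := hrec (-7)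
      rw [if_neg (by rintro ⟨t, ht⟩; omega), show (-7:ℤ)+1 = -6 from by ring, e6] at h
      exact stepOdd_inj (h ▸ (by decide :
        stepOdd !![1,2,-3;1,1,-1;0,1,-1] = !![-2,-1,3;0,-2,1;-1,0,1])).symm
    refine ⟨?_, ?_, ?_, ?_⟩
    · rw [show -4*((0:ℕ):ℤ)-4 = -4 from by norm_num, e4]; decide
    · rw [show -4*((0:ℕ):ℤ)-5 = -5 from by norm_num, e5]; decide
    · rw [show -4*((0:ℕ):ℤ)-6 = -6 from by norm_num, e6]; decide
    · rw [show -4*((0:ℕ):ℤ)-7 = -7 from by norm_num, e7]; decide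
  | succ k ih =>
    obtain ⟨-, -, -, h7⟩ := ih
    have e8 : C (-4*(k:ℤ)-8) = !![-(k:ℤ)-1, -k-2, 2*k+4; -1,-1,1; -(k:ℤ), -k-1, 2*k+2] := by
      have h := hrec (-4*(k:ℤ)-8)
      rw [if_pos ⟨-2*(k:ℤ)-4, by ring⟩, show (-4*(k:ℤ)-8)+1 = -4*(k:ℤ)-7 from by ring] at h
      refine stepEven_inj ((h.symm.trans h7).trans ?_)
      ext i j <;> fin_cases i <;> fin_cases j <;> simp [stepEven, nPart] <;> omega
    have e9 : C (-4*(k:ℤ)-9) = !![(k:ℤ)+3, k+2, -2*k-4; 0,2,-1; (k:ℤ)+2, k+1, -2*k-2] := by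
      have h := hrec (-4*(k:ℤ)-9)
      rw [if_neg (by rintro ⟨t, ht⟩; omega), show (-4*(k:ℤ)-9)+1 = -4*(k:ℤ)-8 from by ring] at h
      refine stepOdd_inj ((h.symm.trans e8).trans ?_)
      ext i j <;> fin_cases i <;> fin_cases j <;> simp [stepOdd, nPart] <;> omega
    have e10 : C (-4*(k:ℤ)-10) = !![-(k:ℤ)-3, -k-2, 2*k+5; 0,-2,1; -(k:ℤ)-2, -k-1, 2*k+3] := by
      have h := hrec (-4*(k:ℤ)-10)
      rw [if_pos ⟨-2*(k:ℤ)-5, by ring⟩, show (-4*(k:ℤ)-10)+1 = -4*(k:ℤ)-9 from by ring] at h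
      refine stepEven_inj ((h.symm.trans e9).trans ?_)
      ext i j <;> fin_cases i <;> fin_cases j <;> simp [stepEven, nPart] <;> omega
    have e11 : C (-4*(k:ℤ)-11) = !![(k:ℤ)+2, k+3, -2*k-5; 1,1,-1; (k:ℤ)+1, k+2, -2*k-3] := by
      have h := hrec (-4*(k:ℤ)-11)
      rw [if_neg (by rintro ⟨t, ht⟩; omega), show (-4*(k:ℤ)-11)+1 = -4*(k:ℤ)-10 from by ring] at h
      refine stepOdd_inj ((h.symm.trans e10).trans ?_)
      ext i j <;> fin_cases i <;> fin_cases j <;> simp [stepOdd, nPart] <;> omega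
    refine ⟨?_, ?_, ?_, ?_⟩ <;> push_cast
    · rw [show -4*((k:ℤ)+1)-4 = -4*(k:ℤ)-8 from by ring, e8]
      ext i j <;> fin_cases i <;> fin_cases j <;> simp <;> ring
    · rw [show -4*((k:ℤ)+1)-5 = -4*(k:ℤ)-9 from by ring, e9]
      ext i j <;> fin_cases i <;> fin_cases j <;> simp <;> ring
    · rw [show -4*((k:ℤ)+1)-6 = -4*(k:ℤ)-10 from by ring, e10]
      ext i j <;> fin_cases i <;> fin_cases j <;> simp <;> ring
    · rw [show -4*((k:ℤ)+1)-7 = -4*(k:ℤ)-11 from by ring, e11]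
      ext i j <;> fin_cases i <;> fin_cases j <;> simp <;> ring

/-- Third column of `C` at positive odd arguments. -/
lemma colF (C : ℤ → Matrix (Fin 3) (Fin 3) ℤ) (h0 : C 0 = C0)
    (hrec : ∀ r : ℤ, C (r + 1) = if Even r then stepEven (C r) else stepOdd (C r))
    (n : ℕ) : C (2*(n:ℤ)+1) 0 2 = -(n:ℤ) ∧ C (2*(n:ℤ)+1) 1 2 = -1 ∧
    C (2*(n:ℤ)+1) 2 2 = -(n:ℤ)-2 := by
  rcases Nat.even_or_odd n with ⟨m, rfl⟩ | ⟨m, rfl⟩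
  · have h := (fwd C h0 hrec m).1
    rw [show 2*((m+m:ℕ):ℤ)+1 = 4*(m:ℤ)+1 from by push_cast; ring, h]
    refine ⟨?_, ?_, ?_⟩ <;> push_cast <;> simp <;> ring
  · have h := (fwd C h0 hrec m).2.2.1
    rw [show 2*((2*m+1:ℕ):ℤ)+1 = 4*(m:ℤ)+3 from by push_cast; ring, h]
    refine ⟨?_, ?_, ?_⟩ <;> push_cast <;> simp <;> ring

/-- Third column of `C` at negative odd arguments `≤ -5`. -/
lemma colB (C : ℤ → Matrix (Fin 3) (Fin 3) ℤ) (h0 : C 0 = C0)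
    (hrec : ∀ r : ℤ, C (r + 1) = if Even r then stepEven (C r) else stepOdd (C r))
    (n : ℕ) : C (-2*(n:ℤ)-5) 0 2 = -(n:ℤ)-2 ∧ C (-2*(n:ℤ)-5) 1 2 = -1 ∧
    C (-2*(n:ℤ)-5) 2 2 = -(n:ℤ) := by
  rcases Nat.even_or_odd n with ⟨m, rfl⟩ | ⟨m, rfl⟩
  · have h := (bwd C h0 hrec m).2.1
    rw [show -2*((m+m:ℕ):ℤ)-5 = -4*(m:ℤ)-5 from by push_cast; ring, h]
    refine ⟨?_, ?_, ?_⟩ <;> push_cast <;> simp <;> ring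
  · have h := (bwd C h0 hrec m).2.2.2
    rw [show -2*((2*m+1:ℕ):ℤ)-5 = -4*(m:ℤ)-7 from by push_cast; ring, h]
    refine ⟨?_, ?_, ?_⟩ <;> push_cast <;> simp <;> ring

set_option maxHeartbeats 1600000 in
/-- Closed form for the degrees `g₃⁽ʳ⁾` of the cluster variables at vertex `3`
on the bipartite belt of `A(Σ̲₂)`. -/
theorem g3_closed_form (C : ℤ → Matrix (Fin 3) (Fin 3) ℤ) (h0 : C 0 = C0)
    (hrec : ∀ r : ℤ, C (r + 1) = if Even r then stepEven (C r) else stepOdd (C r))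
    (g3 : ℤ → ℤ × ℤ × ℤ) (hg0 : g3 0 = (2, 3, 2))
    (hgrec : ∀ r : ℤ, g3 (r + 1) =
      if Even r then g3 r
      else -g3 r + nPart (C r 0 2) • ((1, -3, -2) : ℤ × ℤ × ℤ)
        + (3 * nPart (C r 1 2)) • ((1, 0, 0) : ℤ × ℤ × ℤ)
        + nPart (C r 2 2) • ((1, 3, 2) : ℤ × ℤ × ℤ)) :
    (∀ r : ℤ, 0 ≤ r → g3 (2 * r) = (2 + r, 3, 2)) ∧
      g3 (-2) = (2, 0, 0) ∧
      (∀ r : ℤ, r < -1 → g3 (2 * r) = (-r, -3, -2)) := by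
  obtain ⟨e1, e2, e3⟩ := bwdSmall C h0 hrec
  -- forward values of g3
  have gF : ∀ n : ℕ, g3 (2*(n:ℤ)) = (2+(n:ℤ), 3, 2) ∧ g3 (2*(n:ℤ)+1) = (2+(n:ℤ), 3, 2) := by
    intro n
    induction n with
    | zero =>
      have h := hgrec 0
      rw [if_pos ⟨0, rfl⟩, hg0, zero_add] at h
      norm_num [hg0, h]
    | succ n ih =>
      obtain ⟨-, ih2⟩ := ih
      obtain ⟨c0, c1, c2⟩ := colF C h0 hrec n
      have h := hgrec (2*(n:ℤ)+1)
      rw [if_neg (by rintro ⟨t, ht⟩; omega), ih2, c0, c1, c2,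
        show nPart (-(n:ℤ)) = n from by unfold nPart; omega,
        show nPart (-1:ℤ) = 1 from rfl,
        show nPart (-(n:ℤ)-2) = n+2 from by unfold nPart; omega] at h
      have h2 : g3 (2*(n:ℤ)+1+1) = (2+((n:ℤ)+1), 3, 2) := by
        rw [h]
        simp only [Prod.smul_mk, smul_eq_mul, Prod.neg_mk, Prod.mk_add_mk, Prod.mk.injEq]
        refine ⟨by ring, by ring, by ring⟩
      have h3 := hgrec (2*(n:ℤ)+1+1)
      rw [if_pos ⟨(n:ℤ)+1, by ring⟩, h2] at h3
      constructor
      · rw [show 2*(((n:ℕ)+1:ℕ):ℤ) = 2*(n:ℤ)+1+1 from by push_cast; ring, h2]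
        push_cast; ring_nf
      · rw [show 2*(((n:ℕ)+1:ℕ):ℤ)+1 = 2*(n:ℤ)+1+1+1 from by push_cast; ring, h3]
        push_cast; ring_nf
  -- g3 (-1) and g3 (-2)
  have gm1 : g3 (-1) = (2, 0, 0) := by
    have h := hgrec (-1)
    rw [if_neg (by rintro ⟨t, ht⟩; omega), show (-1:ℤ)+1 = 0 from by ring, hg0, e1] at h
    have h' : g3 (-1) = (0:ℤ) • ((1,-3,-2):ℤ×ℤ×ℤ) + (3*1) • ((1,0,0):ℤ×ℤ×ℤ)
        + (1:ℤ) • ((1,3,2):ℤ×ℤ×ℤ) - (2,3,2) := by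
      rw [show nPart (!![(1:ℤ),0,0;0,2,-1;1,0,-1] 0 2) = 0 from rfl,
        show nPart (!![(1:ℤ),0,0;0,2,-1;1,0,-1] 1 2) = 1 from rfl,
        show nPart (!![(1:ℤ),0,0;0,2,-1;1,0,-1] 2 2) = 1 from rfl] at h
      rw [h]; abel
    rw [h']
    simp only [Prod.smul_mk, smul_eq_mul, Prod.mk_add_mk, Prod.mk_sub_mk, Prod.mk.injEq]
    norm_num
  have gm2 : g3 (-2) = (2, 0, 0) := by
    have h := hgrec (-2)
    rw [if_pos ⟨-1, by ring⟩, show (-2:ℤ)+1 = -1 from by ring] at h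
    rw [← h, gm1]
  -- g3 (-3) and g3 (-4)
  have gm3 : g3 (-3) = (2, -3, -2) := by
    have h := hgrec (-3)
    rw [if_neg (by rintro ⟨t, ht⟩; omega), show (-3:ℤ)+1 = -2 from by ring, gm2, e3] at h
    have h' : g3 (-3) = (1:ℤ) • ((1,-3,-2):ℤ×ℤ×ℤ) + (3*1) • ((1,0,0):ℤ×ℤ×ℤ)
        + (0:ℤ) • ((1,3,2):ℤ×ℤ×ℤ) - (2,0,0) := by
      rw [show nPart (!![(0:ℤ),1,-1;1,1,-1;-1,0,0] 0 2) = 1 from rfl,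
        show nPart (!![(0:ℤ),1,-1;1,1,-1;-1,0,0] 1 2) = 1 from rfl,
        show nPart (!![(0:ℤ),1,-1;1,1,-1;-1,0,0] 2 2) = 0 from rfl] at h
      rw [h]; abel
    rw [h']
    simp only [Prod.smul_mk, smul_eq_mul, Prod.mk_add_mk, Prod.mk_sub_mk, Prod.mk.injEq]
    norm_num
  have gm4 : g3 (-4) = (2, -3, -2) := by
    have h := hgrec (-4)
    rw [if_pos ⟨-2, by ring⟩, show (-4:ℤ)+1 = -3 from by ring] at h
    rw [← h, gm3]
  -- backward values of g3
  have gB : ∀ n : ℕ, g3 (-2*(n:ℤ)-4) = ((n:ℤ)+2, -3, -2) ∧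
      g3 (-2*(n:ℤ)-3) = ((n:ℤ)+2, -3, -2) := by
    intro n
    induction n with
    | zero => norm_num [gm3, gm4]
    | succ n ih =>
      obtain ⟨ih1, -⟩ := ih
      obtain ⟨c0, c1, c2⟩ := colB C h0 hrec n
      have h := hgrec (-2*(n:ℤ)-5)
      rw [if_neg (by rintro ⟨t, ht⟩; omega), show (-2*(n:ℤ)-5)+1 = -2*(n:ℤ)-4 from by ring,
        ih1, c0, c1, c2,
        show nPart (-(n:ℤ)-2) = n+2 from by unfold nPart; omega,
        show nPart (-1:ℤ) = 1 from rfl,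
        show nPart (-(n:ℤ)) = n from by unfold nPart; omega] at h
      have h2 : g3 (-2*(n:ℤ)-5) = ((n:ℤ)+3, -3, -2) := by
        have h' : g3 (-2*(n:ℤ)-5) = ((n:ℤ)+2) • ((1,-3,-2):ℤ×ℤ×ℤ) + (3*1) • ((1,0,0):ℤ×ℤ×ℤ)
            + (n:ℤ) • ((1,3,2):ℤ×ℤ×ℤ) - ((n:ℤ)+2, -3, -2) := by rw [h]; abel
        rw [h']
        simp only [Prod.smul_mk, smul_eq_mul, Prod.mk_add_mk, Prod.mk_sub_mk, Prod.mk.injEq]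
        refine ⟨by ring, by ring, by ring⟩
      have h3 := hgrec (-2*(n:ℤ)-6)
      rw [if_pos ⟨-(n:ℤ)-3, by ring⟩, show (-2*(n:ℤ)-6)+1 = -2*(n:ℤ)-5 from by ring, h2] at h3
      constructor
      · rw [show -2*(((n:ℕ)+1:ℕ):ℤ)-4 = -2*(n:ℤ)-6 from by push_cast; ring, ← h3]
        push_cast; ring_nf
      · rw [show -2*(((n:ℕ)+1:ℕ):ℤ)-3 = -2*(n:ℤ)-5 from by push_cast; ring, h2]
        push_cast; ring_nf
  refine ⟨?_, gm2, ?_⟩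
  · intro r hr
    lift r to ℕ using hr
    simpa using (gF r).1
  · intro r hr
    obtain ⟨n, hn⟩ : ∃ n : ℕ, r = -(n:ℤ)-2 := ⟨(-r-2).toNat, by omega⟩
    subst hn
    have h := (gB n).1
    rw [show 2*(-(n:ℤ)-2) = -2*(n:ℤ)-4 from by ring, h]
    push_cast; ring_nf
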